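/- Let G be a graph without isolated vertices and let 0 ≤ w_v ≤ w_e be weights. Then for every mixed dominating set D of G and every vertex cover C of G: (a) the minimum weight of a mixed dominating set of G is at most w_v·|C|, and (b) w_v·τ(G) ≤ 2·w(D), where τ(G) is the minimum size of a vertex cover of G. -/

import Mathlib

/-- Mixed dominating set, see paper. -/
def IsMixedDomSet {V : Type*} (G : SimpleGraph V) (VD : Finset V) (ED : Finset (Sym2 V)) :
    Prop :=
  (∀ e ∈ ED, e ∈ G.edgeSet) ∧
  (∀ v : V, v ∉ VD → (∃ e ∈ ED, v ∈ e) ∨ ∃ u ∈ VD, G.Adj v u) ∧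
  (∀ e ∈ G.edgeSet, e ∉ ED → ∃ v ∈ e, v ∈ VD ∨ ∃ f ∈ ED, v ∈ f)

/-- A vertex cover contains at least one endpoint of every edge. -/
def IsVertexCover {V : Type*} (G : SimpleGraph V) (C : Finset V) : Prop :=
  ∀ ⦃u w : V⦄, G.Adj u w → u ∈ C ∨ w ∈ C

/-- Let `G` have no isolated vertices and `0 ≤ w_v ≤ w_e`. For every mixed dominating set
`D = (VD, ED)` and every vertex cover `C`: (a) the minimum weight of a mixed dominating set
is at most `w_v * |C|` (witnessed by some mixed dominating set of weight at most `w_v * |C|`),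
and (b) `w_v * τ(G) ≤ 2 * w(D)`. -/

private def sym2Finset {V : Type*} [DecidableEq V] (e : Sym2 V) : Finset V :=
  Sym2.lift ⟨fun a b => {a, b}, fun a b => Finset.pair_comm a b⟩ e

private lemma mem_sym2Finset {V : Type*} [DecidableEq V] {v : V} {e : Sym2 V} :
    v ∈ sym2Finset e ↔ v ∈ e := by
  induction e using Sym2.ind with
  | _ a b => simp [sym2Finset, Sym2.mem_iff]

theorem weight_bounds_of_vertexCover_and_mixedDomSet {V : Type*} (G : SimpleGraph V)
    (hiso : ∀ v : V, ∃ u : V, G.Adj v u)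
    (wv we : ℝ) (hwv : 0 ≤ wv) (hwe : wv ≤ we)
    (VD : Finset V) (ED : Finset (Sym2 V)) (hD : IsMixedDomSet G VD ED)
    (C : Finset V) (hC : IsVertexCover G C)
    (τ : ℕ) (hτ : ∃ C₀ : Finset V, IsVertexCover G C₀ ∧ C₀.card = τ)
    (hτmin : ∀ C₀ : Finset V, IsVertexCover G C₀ → τ ≤ C₀.card) :
    (∃ (VD' : Finset V) (ED' : Finset (Sym2 V)), IsMixedDomSet G VD' ED' ∧
      wv * VD'.card + we * ED'.card ≤ wv * C.card) ∧
    wv * τ ≤ 2 * (wv * VD.card + we * ED.card) := by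
  classical
  constructor
  · refine ⟨C, ∅, ⟨?_, ?_, ?_⟩, by simp⟩
    · simp
    · intro v hv
      obtain ⟨u, hu⟩ := hiso v
      rcases hC hu with h | h
      · exact absurd h hv
      · exact Or.inr ⟨u, h, hu⟩
    · intro e he _
      induction e using Sym2.ind with
      | _ a b =>
        rcases hC (G.mem_edgeSet.mp he) with h | h
        · exact ⟨a, Sym2.mem_mk_left a b, Or.inl h⟩
        · exact ⟨b, Sym2.mem_mk_right a b, Or.inl h⟩
  · obtain ⟨h1, h2, h3⟩ := hD
    set C₀ : Finset V := VD ∪ ED.biUnion (fun e => sym2Finset e) with hC₀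
    have hcov : IsVertexCover G C₀ := by
      intro u w huw
      by_cases he : s(u, w) ∈ ED
      · exact Or.inl (Finset.mem_union_right _ (Finset.mem_biUnion.mpr
          ⟨_, he, mem_sym2Finset.mpr (Sym2.mem_mk_left u w)⟩))
      · obtain ⟨v, hv, hv'⟩ := h3 _ (G.mem_edgeSet.mpr huw) he
        have hvC : v ∈ C₀ := by
          rcases hv' with h | ⟨f, hf, hvf⟩
          · exact Finset.mem_union_left _ h
          · exact Finset.mem_union_right _ (Finset.mem_biUnion.mpr
              ⟨f, hf, mem_sym2Finset.mpr hvf⟩)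
        rcases Sym2.mem_iff.mp hv with rfl | rfl
        · exact Or.inl hvC
        · exact Or.inr hvC
    have hcard : (C₀.card : ℝ) ≤ VD.card + 2 * ED.card := by
      have h1' : C₀.card ≤ VD.card + (ED.biUnion (fun e => sym2Finset e)).card :=
        Finset.card_union_le _ _
      have h2' : (ED.biUnion (fun e => sym2Finset e)).card ≤ ED.card * 2 := by
        refine le_trans (Finset.card_biUnion_le) ?_
        refine le_trans (Finset.sum_le_card_nsmul _ _ 2 ?_) (by simp [mul_comm])
        intro e _
        induction e using Sym2.ind with
        | _ a b =>
          simpa [sym2Finset] using Finset.card_insert_le a {b}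
      have : C₀.card ≤ VD.card + 2 * ED.card := by omega
      exact_mod_cast this
    have hτle : (τ : ℝ) ≤ VD.card + 2 * ED.card :=
      le_trans (by exact_mod_cast hτmin C₀ hcov) hcard
    calc wv * τ ≤ wv * (VD.card + 2 * ED.card) := by
          exact mul_le_mul_of_nonneg_left hτle hwv
      _ = wv * VD.card + 2 * (wv * ED.card) := by ring
      _ ≤ 2 * (wv * VD.card) + 2 * (we * ED.card) := by
          have h1 : wv * VD.card ≤ 2 * (wv * VD.card) := by
            nlinarith [mul_nonneg hwv (Nat.cast_nonneg VD.card : (0:ℝ) ≤ VD.card)]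
          have h2 : wv * (ED.card : ℝ) ≤ we * ED.card :=
            mul_le_mul_of_nonneg_right hwe (Nat.cast_nonneg _)
          linarith
      _ = 2 * (wv * VD.card + we * ED.card) := by ring
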